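/- Let c : (0,∞)² → [0,∞) and γ₁ > 0. If ∫₀^∞ c(x,y) d(x^{−2γ₁}) is finite (as a Stieltjes integral with respect to the decreasing function x ↦ x^{−2γ₁}), and c is nondecreasing in its first argument, then ∫₀^∞ ∫₀^∞ c(x₁ ∧ x₂, y) d(x₁^{−γ₁}) d(x₂^{−γ₁}) = ∫₀^∞ c(x,y) d(x^{−2γ₁}). -/

import Mathlib

open Real MeasureTheory
open scoped ENNReal

lemma auxA (γ₁ : ℝ) (hγ₁ : 0 < γ₁) {a : ℝ} (ha : 0 < a) :
    ∫⁻ x in Set.Ioi a, ENNReal.ofReal (γ₁ * x ^ (-γ₁ - 1)) = ENNReal.ofReal (a ^ (-γ₁)) := by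
  rw [← ofReal_integral_eq_lintegral_ofReal]
  · congr 1
    rw [integral_const_mul, integral_Ioi_rpow_of_lt (by linarith) ha]
    have : -γ₁ - 1 + 1 = -γ₁ := by ring
    rw [this]
    field_simp
  · exact ((integrableOn_Ioi_rpow_of_lt (by linarith) ha).const_mul γ₁)
  · filter_upwards [ae_restrict_mem measurableSet_Ioi] with x hx
    exact mul_nonneg hγ₁.le (rpow_nonneg (le_of_lt (lt_trans ha hx)) _)

/-- Fubini-type identity for the min of two Stieltjes variables.
The Stieltjes integral `∫₀^∞ f(x) d(x^{-ργ₁})` is rendered (up to the common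
sign convention) as `ργ₁ ∫₀^∞ f(x) x^{-ργ₁-1} dx`. -/
theorem stmt_1 (γ₁ : ℝ) (hγ₁ : 0 < γ₁) (y : ℝ) (hy : 0 < y) (c : ℝ → ℝ → ℝ)
    (hmeas : Measurable fun x => c x y)
    (hnonneg : ∀ x y' : ℝ, 0 ≤ c x y')
    (hmono : MonotoneOn (fun x => c x y) (Set.Ioi (0 : ℝ)))
    (hint : IntegrableOn (fun x => c x y * (2 * γ₁) * x ^ (-(2 * γ₁) - 1)) (Set.Ioi (0 : ℝ))) :
    ∫ x₂ in Set.Ioi (0 : ℝ),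
        (∫ x₁ in Set.Ioi (0 : ℝ), c (min x₁ x₂) y * γ₁ * x₁ ^ (-γ₁ - 1)) * γ₁ * x₂ ^ (-γ₁ - 1)
      = ∫ x in Set.Ioi (0 : ℝ), c x y * (2 * γ₁) * x ^ (-(2 * γ₁) - 1) := by
  set F : ℝ → ℝ≥0∞ := fun x => ENNReal.ofReal (c x y) with hFdef
  set g : ℝ → ℝ≥0∞ := fun x => ENNReal.ofReal (γ₁ * x ^ (-γ₁ - 1)) with hgdef
  have hF : Measurable F := hmeas.ennreal_ofReal
  have hg : Measurable g := ((measurable_id.pow_const _).const_mul γ₁).ennreal_ofReal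
  -- combination lemma
  have hcomb : ∀ x : ℝ, 0 < x →
      ENNReal.ofReal (x ^ (-γ₁)) * g x = ENNReal.ofReal (γ₁ * x ^ (-(2 * γ₁) - 1)) := by
    intro x hx
    rw [hgdef, ← ENNReal.ofReal_mul (rpow_nonneg hx.le _)]
    congr 1
    rw [mul_left_comm, ← Real.rpow_add hx]
    ring_nf
  -- the target lintegrals
  set S : ℝ≥0∞ := ∫⁻ x in Set.Ioi (0:ℝ), F x * ENNReal.ofReal (γ₁ * x ^ (-(2 * γ₁) - 1))
    with hSdef
  set T : ℝ≥0∞ := ∫⁻ x in Set.Ioi (0:ℝ), F x * ENNReal.ofReal ((2 * γ₁) * x ^ (-(2 * γ₁) - 1))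
    with hTdef
  have hT_conv : T = ∫⁻ x in Set.Ioi (0:ℝ),
      ENNReal.ofReal (c x y * (2 * γ₁) * x ^ (-(2 * γ₁) - 1)) := by
    refine lintegral_congr fun x => ?_
    rw [mul_assoc (c x y), ENNReal.ofReal_mul (hnonneg x y)]
  have hint_nonneg : 0 ≤ᵐ[volume.restrict (Set.Ioi (0:ℝ))]
      fun x => c x y * (2 * γ₁) * x ^ (-(2 * γ₁) - 1) := by
    filter_upwards [ae_restrict_mem measurableSet_Ioi] with x hx
    exact mul_nonneg (mul_nonneg (hnonneg x y) (by linarith)) (rpow_nonneg (le_of_lt hx) _)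
  have hTfin : T ≠ ⊤ := by
    rw [hT_conv, ← ofReal_integral_eq_lintegral_ofReal hint hint_nonneg]
    exact ENNReal.ofReal_ne_top
  have hT_RHS : (∫ x in Set.Ioi (0:ℝ), c x y * (2 * γ₁) * x ^ (-(2 * γ₁) - 1)) = T.toReal := by
    rw [integral_eq_lintegral_of_nonneg_ae hint_nonneg hint.aestronglyMeasurable, hT_conv]
  -- inner lintegral pieces
  set J : ℝ → ℝ≥0∞ := fun x₂ => ∫⁻ x₁ in Set.Ioc (0:ℝ) x₂, F x₁ * g x₁ with hJdef
  set I : ℝ → ℝ≥0∞ := fun x₂ => ∫⁻ x₁ in Set.Ioi (0:ℝ), F (min x₁ x₂) * g x₁ with hIdef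
  have hI_meas : Measurable I := by
    apply Measurable.lintegral_prod_right'
      (f := fun p : ℝ × ℝ => F (min p.2 p.1) * g p.2)
    exact (hF.comp (measurable_snd.min measurable_fst)).mul (hg.comp measurable_snd)
  have hstep1 : ∀ x₂ : ℝ, 0 < x₂ →
      I x₂ = J x₂ + F x₂ * ENNReal.ofReal (x₂ ^ (-γ₁)) := by
    intro x₂ hx₂
    simp only [hIdef]
    rw [show Set.Ioi (0:ℝ) = Set.Ioc 0 x₂ ∪ Set.Ioi x₂ from
      (Set.Ioc_union_Ioi_eq_Ioi hx₂.le).symm,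
      lintegral_union measurableSet_Ioi (Set.Ioc_disjoint_Ioi le_rfl)]
    congr 1
    · refine setLIntegral_congr_fun measurableSet_Ioc (fun x₁ hx₁ => ?_)
      rw [min_eq_left hx₁.2]
    · have e : ∫⁻ x₁ in Set.Ioi x₂, F (min x₁ x₂) * g x₁
          = ∫⁻ x₁ in Set.Ioi x₂, F x₂ * g x₁ := by
        refine setLIntegral_congr_fun measurableSet_Ioi (fun x₁ hx₁ => ?_)
        rw [min_eq_right (le_of_lt hx₁)]
      rw [e, lintegral_const_mul _ hg]
      congr 1
      simp only [hgdef]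
      exact auxA γ₁ hγ₁ hx₂
  have hSfin : S ≠ ⊤ := by
    refine ne_top_of_le_ne_top hTfin ?_
    refine lintegral_mono_ae ?_
    filter_upwards [ae_restrict_mem measurableSet_Ioi] with x hx
    exact mul_le_mul_right (ENNReal.ofReal_le_ofReal
      (mul_le_mul_of_nonneg_right (by linarith) (rpow_nonneg (le_of_lt hx) _))) _
  have hJfin : ∀ x₂ : ℝ, 0 < x₂ → J x₂ ≠ ⊤ := by
    intro x₂ hx₂
    have hbound : J x₂ ≤ ENNReal.ofReal (x₂ ^ γ₁) * S := by
      calc J x₂ ≤ ∫⁻ x₁ in Set.Ioc (0:ℝ) x₂,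
            ENNReal.ofReal (x₂ ^ γ₁) * (F x₁ * ENNReal.ofReal (γ₁ * x₁ ^ (-(2 * γ₁) - 1))) := by
            refine lintegral_mono_ae ?_
            filter_upwards [ae_restrict_mem measurableSet_Ioc] with x₁ hx₁
            rw [mul_left_comm]
            refine mul_le_mul_right ?_ _
            simp only [hgdef]
            rw [← ENNReal.ofReal_mul (rpow_nonneg (le_of_lt (lt_of_lt_of_le hx₁.1 hx₁.2)) _)]
            refine ENNReal.ofReal_le_ofReal ?_
            have key : γ₁ * x₁ ^ (-γ₁ - 1) = x₁ ^ γ₁ * (γ₁ * x₁ ^ (-(2 * γ₁) - 1)) := by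
              rw [mul_left_comm, ← Real.rpow_add hx₁.1]
              ring_nf
            rw [key]
            refine mul_le_mul_of_nonneg_right (rpow_le_rpow hx₁.1.le hx₁.2 hγ₁.le) ?_
            exact mul_nonneg hγ₁.le (rpow_nonneg hx₁.1.le _)
        _ = ENNReal.ofReal (x₂ ^ γ₁) * ∫⁻ x₁ in Set.Ioc (0:ℝ) x₂,
              F x₁ * ENNReal.ofReal (γ₁ * x₁ ^ (-(2 * γ₁) - 1)) := by
            rw [lintegral_const_mul' _ _ ENNReal.ofReal_ne_top]
        _ ≤ ENNReal.ofReal (x₂ ^ γ₁) * S := by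
            refine mul_le_mul_right (lintegral_mono_set ?_) _
            exact Set.Ioc_subset_Ioi_self
    exact ne_top_of_le_ne_top (ENNReal.mul_ne_top ENNReal.ofReal_ne_top hSfin) hbound
  have hIfin : ∀ x₂ : ℝ, 0 < x₂ → I x₂ ≠ ⊤ := by
    intro x₂ hx₂
    rw [hstep1 x₂ hx₂]
    exact ENNReal.add_ne_top.mpr ⟨hJfin x₂ hx₂,
      ENNReal.mul_ne_top ENNReal.ofReal_ne_top ENNReal.ofReal_ne_top⟩
  -- inner Bochner equals toReal of I
  have hinner : ∀ x₂ : ℝ,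
      (∫ x₁ in Set.Ioi (0:ℝ), c (min x₁ x₂) y * γ₁ * x₁ ^ (-γ₁ - 1)) = (I x₂).toReal := by
    intro x₂
    rw [integral_eq_lintegral_of_nonneg_ae]
    · congr 1
      refine lintegral_congr fun x₁ => ?_
      rw [mul_assoc, ENNReal.ofReal_mul (hnonneg _ y)]
    · filter_upwards [ae_restrict_mem measurableSet_Ioi] with x₁ hx₁
      exact mul_nonneg (mul_nonneg (hnonneg _ y) hγ₁.le) (rpow_nonneg (le_of_lt hx₁) _)
    · exact (((hmeas.comp (measurable_id.min measurable_const)).mul measurable_const).mul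
        (measurable_id.pow_const _)).aestronglyMeasurable
  -- LHS to lintegral
  have hLHS : (∫ x₂ in Set.Ioi (0:ℝ),
      (∫ x₁ in Set.Ioi (0:ℝ), c (min x₁ x₂) y * γ₁ * x₁ ^ (-γ₁ - 1)) * γ₁ * x₂ ^ (-γ₁ - 1))
      = (∫⁻ x₂ in Set.Ioi (0:ℝ), I x₂ * g x₂).toReal := by
    have e1 : ∀ x₂ : ℝ,
        (∫ x₁ in Set.Ioi (0:ℝ), c (min x₁ x₂) y * γ₁ * x₁ ^ (-γ₁ - 1)) * γ₁ * x₂ ^ (-γ₁ - 1)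
        = (I x₂).toReal * γ₁ * x₂ ^ (-γ₁ - 1) := fun x₂ => by rw [hinner x₂]
    simp only [e1]
    rw [integral_eq_lintegral_of_nonneg_ae]
    · congr 1
      refine lintegral_congr_ae ?_
      filter_upwards [ae_restrict_mem measurableSet_Ioi] with x₂ hx₂
      rw [mul_assoc, ENNReal.ofReal_mul ENNReal.toReal_nonneg,
        ENNReal.ofReal_toReal (hIfin x₂ hx₂)]
    · filter_upwards [ae_restrict_mem measurableSet_Ioi] with x₂ hx₂
      exact mul_nonneg (mul_nonneg ENNReal.toReal_nonneg hγ₁.le)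
        (rpow_nonneg (le_of_lt hx₂) _)
    · exact ((hI_meas.ennreal_toReal.mul measurable_const).mul
        (measurable_id.pow_const _)).aestronglyMeasurable
  -- the Tonelli computation
  have hsecond : ∫⁻ x₂ in Set.Ioi (0:ℝ), F x₂ * ENNReal.ofReal (x₂ ^ (-γ₁)) * g x₂ = S := by
    refine lintegral_congr_ae ?_
    filter_upwards [ae_restrict_mem measurableSet_Ioi] with x₂ hx₂
    rw [mul_assoc, hcomb x₂ hx₂]
  set k : ℝ → ℝ → ℝ≥0∞ := fun x₂ x₁ =>
    (Set.Ioc (0:ℝ) x₂).indicator (fun t => F t * g t) x₁ * g x₂ with hkdef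
  have hk_meas : Measurable (Function.uncurry k) := by
    have huk : Function.uncurry k = fun p : ℝ × ℝ =>
        (if 0 < p.2 ∧ p.2 ≤ p.1 then F p.2 * g p.2 else 0) * g p.1 := by
      funext p
      simp [hkdef, Function.uncurry, Set.indicator_apply, Set.mem_Ioc]
    rw [huk]
    refine Measurable.mul ?_ (hg.comp measurable_fst)
    refine Measurable.ite ?_ ((hF.comp measurable_snd).mul (hg.comp measurable_snd))
      measurable_const
    exact (measurableSet_lt measurable_const measurable_snd).inter
      (measurableSet_le measurable_snd measurable_fst)
  have hfirst : ∫⁻ x₂ in Set.Ioi (0:ℝ), J x₂ * g x₂ = S := by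
    have e1 : ∀ x₂ : ℝ, J x₂ * g x₂ = ∫⁻ x₁ in Set.Ioi (0:ℝ), k x₂ x₁ := by
      intro x₂
      rw [hkdef]
      simp only []
      rw [lintegral_mul_const' (g x₂) _ ENNReal.ofReal_ne_top,
        lintegral_indicator measurableSet_Ioc,
        Measure.restrict_restrict measurableSet_Ioc,
        Set.inter_eq_left.mpr Set.Ioc_subset_Ioi_self]
    have e2 : ∀ x₁ : ℝ, 0 < x₁ →
        (∫⁻ x₂ in Set.Ioi (0:ℝ), k x₂ x₁) = F x₁ * g x₁ * ENNReal.ofReal (x₁ ^ (-γ₁)) := by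
      intro x₁ hx₁
      have e3 : ∀ x₂ : ℝ, k x₂ x₁
          = (Set.Ici x₁).indicator (fun x₂' => F x₁ * g x₁ * g x₂') x₂ := by
        intro x₂
        rw [hkdef]
        simp only [Set.indicator_apply, Set.mem_Ioc, Set.mem_Ici]
        by_cases h : x₁ ≤ x₂
        · simp [h, hx₁]
        · simp [h]
      simp only [e3]
      rw [lintegral_indicator measurableSet_Ici,
        Measure.restrict_restrict measurableSet_Ici,
        show Set.Ici x₁ ∩ Set.Ioi 0 = Set.Ici x₁ from
          Set.inter_eq_left.mpr (fun t ht => lt_of_lt_of_le hx₁ ht),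
        ← restrict_Ioi_eq_restrict_Ici,
        lintegral_const_mul _ hg]
      congr 1
      simp only [hgdef]
      exact auxA γ₁ hγ₁ hx₁
    calc ∫⁻ x₂ in Set.Ioi (0:ℝ), J x₂ * g x₂
        = ∫⁻ x₂ in Set.Ioi (0:ℝ), ∫⁻ x₁ in Set.Ioi (0:ℝ), k x₂ x₁ := by
          simp only [e1]
      _ = ∫⁻ x₁ in Set.Ioi (0:ℝ), ∫⁻ x₂ in Set.Ioi (0:ℝ), k x₂ x₁ :=
          lintegral_lintegral_swap hk_meas.aemeasurable
      _ = ∫⁻ x₁ in Set.Ioi (0:ℝ), F x₁ * g x₁ * ENNReal.ofReal (x₁ ^ (-γ₁)) := by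
          refine lintegral_congr_ae ?_
          filter_upwards [ae_restrict_mem measurableSet_Ioi] with x₁ hx₁
          exact e2 x₁ hx₁
      _ = S := by
          refine lintegral_congr_ae ?_
          filter_upwards [ae_restrict_mem measurableSet_Ioi] with x₁ hx₁
          rw [mul_assoc, mul_comm (g x₁), hcomb x₁ hx₁]
  -- putting it together
  have hmain : ∫⁻ x₂ in Set.Ioi (0:ℝ), I x₂ * g x₂ = T := by
    have split : ∫⁻ x₂ in Set.Ioi (0:ℝ), I x₂ * g x₂
        = (∫⁻ x₂ in Set.Ioi (0:ℝ), J x₂ * g x₂)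
          + ∫⁻ x₂ in Set.Ioi (0:ℝ), F x₂ * ENNReal.ofReal (x₂ ^ (-γ₁)) * g x₂ := by
      have hm2 : Measurable fun x₂ : ℝ => F x₂ * ENNReal.ofReal (x₂ ^ (-γ₁)) * g x₂ :=
        (hF.mul ((measurable_id.pow_const _).ennreal_ofReal)).mul hg
      rw [← lintegral_add_right _ hm2]
      refine lintegral_congr_ae ?_
      filter_upwards [ae_restrict_mem measurableSet_Ioi] with x₂ hx₂
      rw [hstep1 x₂ hx₂, add_mul]
    rw [split, hfirst, hsecond]
    have hm3 : Measurable fun x : ℝ => F x * ENNReal.ofReal (γ₁ * x ^ (-(2 * γ₁) - 1)) :=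
      hF.mul ((measurable_id.pow_const _).const_mul γ₁).ennreal_ofReal
    rw [hTdef, hSdef, ← lintegral_add_left hm3]
    refine lintegral_congr_ae ?_
    filter_upwards [ae_restrict_mem measurableSet_Ioi] with x hx
    rw [← mul_add, ← ENNReal.ofReal_add (mul_nonneg hγ₁.le (rpow_nonneg hx.le _))
      (mul_nonneg hγ₁.le (rpow_nonneg hx.le _))]
    congr 2
    ring
  rw [hLHS, hmain, hT_RHS]
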